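/- The set 𝒩₅ of 5-tuples (m₁,…,m₅) of natural numbers satisfying 2 ≤ m₁ ≤ … ≤ m₅, Θ > 0, 2/Θ a positive integer and m₅ ≤ 2/Θ consists exactly of the two tuples (2,2,2,2,2) and (2,2,2,2,3), and the corresponding set 𝒩₆ of 6-tuples consists exactly of the single tuple (2,2,2,2,2,2). -/

import Mathlib

/-- The orbifold canonical degree `Θ` of a tuple of natural numbers (given as a list). -/
def thetaL (l : List ℕ) : ℚ := -2 + (l.map fun m => 1 - 1 / (m : ℚ)).sum

/-- Membership in `𝒩_r`: the entries are at least `2` and weakly increasing, `Θ > 0`,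
`2/Θ` is a positive integer, and every entry (equivalently, the largest entry `m_r`)
is at most `2/Θ`. -/
def NcondL (l : List ℕ) : Prop :=
  (∀ m ∈ l, 2 ≤ m) ∧ l.Pairwise (· ≤ ·) ∧ 0 < thetaL l ∧
    (∃ n : ℕ, 0 < n ∧ (2 : ℚ) / thetaL l = n) ∧
    ∀ m ∈ l, (m : ℚ) ≤ 2 / thetaL l

lemma aux_inv_le_half {m : ℕ} (hm : 2 ≤ m) : (1 : ℚ) / m ≤ 1 / 2 := by
  have h2 : (2 : ℚ) ≤ m := by exact_mod_cast hm
  rw [div_le_div_iff₀ (by linarith) (by norm_num)]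
  linarith

theorem stmt_3 :
    (∀ m₁ m₂ m₃ m₄ m₅ : ℕ, NcondL [m₁, m₂, m₃, m₄, m₅] ↔
      ((m₁, m₂, m₃, m₄, m₅) = (2,2,2,2,2) ∨ (m₁, m₂, m₃, m₄, m₅) = (2,2,2,2,3))) ∧
    (∀ m₁ m₂ m₃ m₄ m₅ m₆ : ℕ, NcondL [m₁, m₂, m₃, m₄, m₅, m₆] ↔
      (m₁, m₂, m₃, m₄, m₅, m₆) = (2,2,2,2,2,2)) := by
  constructor
  · intro m₁ m₂ m₃ m₄ m₅
    constructor
    · rintro ⟨h2, hs, hθ, -, hb⟩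
      have h1 : 2 ≤ m₁ := h2 _ (by simp)
      have h2' : 2 ≤ m₂ := h2 _ (by simp)
      have h3 : 2 ≤ m₃ := h2 _ (by simp)
      have h4 : 2 ≤ m₄ := h2 _ (by simp)
      have h5 : 2 ≤ m₅ := h2 _ (by simp)
      simp only [List.pairwise_cons, List.mem_cons, List.not_mem_nil, List.Pairwise.nil,
        and_true, List.mem_singleton, forall_eq_or_imp, forall_eq] at hs
      have hθhalf : (1 : ℚ) / 2 ≤ thetaL [m₁, m₂, m₃, m₄, m₅] := by
        have := aux_inv_le_half h1
        have := aux_inv_le_half h2'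
        have := aux_inv_le_half h3
        have := aux_inv_le_half h4
        have := aux_inv_le_half h5
        have e : thetaL [m₁, m₂, m₃, m₄, m₅] = -2 + ((1 - 1/(m₁:ℚ)) + ((1 - 1/(m₂:ℚ)) +
          ((1 - 1/(m₃:ℚ)) + ((1 - 1/(m₄:ℚ)) + ((1 - 1/(m₅:ℚ)) + 0))))) := rfl
        rw [e]; linarith
      have hdiv : (2 : ℚ) / thetaL [m₁, m₂, m₃, m₄, m₅] ≤ 4 := by
        rw [div_le_iff₀ hθ]; linarith
      have hm5 : (m₅ : ℚ) ≤ 4 := le_trans (hb _ (by simp)) hdiv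
      have hm5' : m₅ ≤ 4 := by exact_mod_cast hm5
      obtain ⟨⟨h12, h13, h14, h15, -⟩, ⟨h23, h24, h25, -⟩, ⟨h34, h35, -⟩, ⟨h45, -⟩, -⟩ := hs
      have b1 : m₁ ≤ 4 := le_trans h15 hm5'
      have b2 : m₂ ≤ 4 := le_trans h25 hm5'
      have b3 : m₃ ≤ 4 := le_trans h35 hm5'
      have b4 : m₄ ≤ 4 := le_trans h45 hm5'
      interval_cases m₁ <;> interval_cases m₂ <;> interval_cases m₃ <;>
        interval_cases m₄ <;> interval_cases m₅ <;>
        first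
          | (left; rfl)
          | (right; rfl)
          | (exfalso; norm_num [thetaL] at hb)
    · rintro (h | h) <;> simp only [Prod.mk.injEq] at h <;>
        obtain ⟨rfl, rfl, rfl, rfl, rfl⟩ := h
      · exact ⟨by norm_num, by norm_num [List.pairwise_cons], by norm_num [thetaL],
          ⟨4, by norm_num, by norm_num [thetaL]⟩, by norm_num [thetaL]⟩
      · exact ⟨by norm_num, by norm_num [List.pairwise_cons], by norm_num [thetaL],
          ⟨3, by norm_num, by norm_num [thetaL]⟩, by norm_num [thetaL]⟩
  · intro m₁ m₂ m₃ m₄ m₅ m₆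
    constructor
    · rintro ⟨h2, hs, hθ, -, hb⟩
      have h1 : 2 ≤ m₁ := h2 _ (by simp)
      have h2' : 2 ≤ m₂ := h2 _ (by simp)
      have h3 : 2 ≤ m₃ := h2 _ (by simp)
      have h4 : 2 ≤ m₄ := h2 _ (by simp)
      have h5 : 2 ≤ m₅ := h2 _ (by simp)
      have h6 : 2 ≤ m₆ := h2 _ (by simp)
      simp only [List.pairwise_cons, List.mem_cons, List.not_mem_nil, List.Pairwise.nil,
        and_true, List.mem_singleton, forall_eq_or_imp, forall_eq] at hs
      have hθone : (1 : ℚ) ≤ thetaL [m₁, m₂, m₃, m₄, m₅, m₆] := by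
        have := aux_inv_le_half h1
        have := aux_inv_le_half h2'
        have := aux_inv_le_half h3
        have := aux_inv_le_half h4
        have := aux_inv_le_half h5
        have := aux_inv_le_half h6
        have e : thetaL [m₁, m₂, m₃, m₄, m₅, m₆] = -2 + ((1 - 1/(m₁:ℚ)) + ((1 - 1/(m₂:ℚ)) +
          ((1 - 1/(m₃:ℚ)) + ((1 - 1/(m₄:ℚ)) + ((1 - 1/(m₅:ℚ)) + ((1 - 1/(m₆:ℚ)) + 0)))))) := rfl
        rw [e]; linarith
      have hdiv : (2 : ℚ) / thetaL [m₁, m₂, m₃, m₄, m₅, m₆] ≤ 2 := by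
        rw [div_le_iff₀ hθ]; linarith
      have key : ∀ m ∈ [m₁, m₂, m₃, m₄, m₅, m₆], m = 2 := by
        intro m hm
        have hup : (m : ℚ) ≤ 2 := le_trans (hb m hm) hdiv
        have hle : m ≤ 2 := by exact_mod_cast hup
        have := h2 m hm
        omega
      have e1 : m₁ = 2 := key _ (by simp)
      have e2 : m₂ = 2 := key _ (by simp)
      have e3 : m₃ = 2 := key _ (by simp)
      have e4 : m₄ = 2 := key _ (by simp)
      have e5 : m₅ = 2 := key _ (by simp)
      have e6 : m₆ = 2 := key _ (by simp)
      subst e1; subst e2; subst e3; subst e4; subst e5; subst e6; rfl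
    · intro h
      simp only [Prod.mk.injEq] at h
      obtain ⟨rfl, rfl, rfl, rfl, rfl, rfl⟩ := h
      exact ⟨by norm_num, by norm_num [List.pairwise_cons], by norm_num [thetaL],
        ⟨2, by norm_num, by norm_num [thetaL]⟩, by norm_num [thetaL]⟩
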